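/- Let p = 1 in the framework. Let (f^k)_{k∈ℕ} be a sequence in ℝ^n with ‖f^k‖₂ = 1 for all k, such that for each k there exists s^k ∈ ∂S(f^k) for which f^{k+1} minimizes u ↦ R(u) − F(f^k)⟨u, s^k⟩ over the Euclidean unit ball {u : ‖u‖₂ ≤ 1}. Then the sequence F(f^k) is nonincreasing and converges to some λ* ∈ [0, F(f^0)]; moreover (f^k) has a convergent subsequence, and every cluster point f* of (f^k) satisfies f* ≠ 0 and there exist r* ∈ ∂R(f*), s* ∈ ∂S(f*) with r* − λ* s* = 0, where λ* = R(f*)/S(f*). -/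

import Mathlib

open Finset Filter

/-- Euclidean inner product on `Fin n → ℝ`. -/
def ip {n : ℕ} (x y : Fin n → ℝ) : ℝ := ∑ i, x i * y i

/-- Subdifferential of a convex function `R : ℝ^n → ℝ` at `x`. -/
def subdiff {n : ℕ} (R : (Fin n → ℝ) → ℝ) (x : Fin n → ℝ) : Set (Fin n → ℝ) :=
  {r | ∀ y, R x + ip r (y - x) ≤ R y}

/-- `G` is positively `p`-homogeneous: `G (γ • x) = γ^p * G x` for all `γ ≥ 0`. -/
def PosHomog {n : ℕ} (p : ℝ) (G : (Fin n → ℝ) → ℝ) : Prop :=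
  ∀ γ : ℝ, 0 ≤ γ → ∀ x, G (γ • x) = γ ^ p * G x

section aux
variable {n : ℕ}

lemma ip_comm (x y : Fin n → ℝ) : ip x y = ip y x := by
  simp [ip, mul_comm]

lemma ip_sub_right (x y z : Fin n → ℝ) : ip x (y - z) = ip x y - ip x z := by
  simp [ip, mul_sub, Finset.sum_sub_distrib]

lemma ip_zero_right (x : Fin n → ℝ) : ip x 0 = 0 := by simp [ip]

lemma ip_neg_right (x y : Fin n → ℝ) : ip x (-y) = -ip x y := by
  simp [ip, Finset.sum_neg_distrib]

lemma ip_smul_left (c : ℝ) (x y : Fin n → ℝ) : ip (c • x) y = c * ip x y := by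
  simp [ip, Finset.mul_sum, mul_assoc]

lemma ip_smul_right (c : ℝ) (x y : Fin n → ℝ) : ip x (c • y) = c * ip x y := by
  rw [ip_comm, ip_smul_left, ip_comm]

lemma ip_single (x : Fin n → ℝ) (i : Fin n) : ip x (Pi.single i 1) = x i := by
  simp [ip, Pi.single_apply, mul_ite, Finset.sum_ite_eq]

lemma ip_cont : Continuous fun p : (Fin n → ℝ) × (Fin n → ℝ) => ip p.1 p.2 := by
  unfold ip
  exact continuous_finset_sum _ fun i _ =>
    (((continuous_apply i).comp continuous_fst).mul ((continuous_apply i).comp continuous_snd))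

lemma homog_zero {S : (Fin n → ℝ) → ℝ} (h : PosHomog 1 S) : S 0 = 0 := by
  have := h 0 le_rfl 0
  simpa using this

lemma euler {S : (Fin n → ℝ) → ℝ} (hhom : PosHomog 1 S) {x s : Fin n → ℝ}
    (hs : s ∈ subdiff S x) : ip s x = S x := by
  have h0 : S 0 = 0 := homog_zero hhom
  have h2 : S ((2:ℝ) • x) = 2 * S x := by
    have := hhom 2 (by norm_num) x
    simpa using this
  have hx1 := hs ((2:ℝ) • x)
  have hx0 := hs 0
  rw [h2] at hx1
  have e1 : (2:ℝ) • x - x = x := by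
    rw [two_smul]; abel
  rw [e1] at hx1
  rw [ip_sub_right, ip_zero_right, h0] at hx0
  have := hx1
  linarith

lemma support_ineq {S : (Fin n → ℝ) → ℝ} (hhom : PosHomog 1 S) {x s : Fin n → ℝ}
    (hs : s ∈ subdiff S x) : ∀ y, ip s y ≤ S y := by
  intro y
  have h := hs y
  rw [ip_sub_right, euler hhom hs] at h
  linarith

end aux

/-- Convergence of the inverse power method for `p = 1`: the values `F(f^k)` decrease
monotonically to some `λ* ∈ [0, F(f^0)]`, the sequence has a convergent subsequence, and
every cluster point `f*` is a nonzero nonlinear eigenvector: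
`0 ∈ ∂R(f*) − λ* ∂S(f*)` with `λ* = R(f*)/S(f*)`. -/
theorem ipm_convergence_p_one {n : ℕ} (R S : (Fin n → ℝ) → ℝ)
    (hRconv : ConvexOn ℝ Set.univ R) (hSconv : ConvexOn ℝ Set.univ S)
    (hRlip : ∃ K : NNReal, LipschitzWith K R) (hSlip : ∃ K : NNReal, LipschitzWith K S)
    (hReven : ∀ x, R (-x) = R x) (hSeven : ∀ x, S (-x) = S x)
    (hRnonneg : ∀ x, 0 ≤ R x) (hSnonneg : ∀ x, 0 ≤ S x)
    (hRhom : PosHomog 1 R) (hShom : PosHomog 1 S)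
    (hS0 : ∀ g : Fin n → ℝ, S g = 0 ↔ g = 0)
    (f : ℕ → Fin n → ℝ)
    (hnorm : ∀ k, ∑ i, (f k i) ^ 2 = 1)
    (hstep : ∀ k, ∃ s ∈ subdiff S (f k), ∀ u : Fin n → ℝ, (∑ i, (u i) ^ 2) ≤ 1 →
      R (f (k + 1)) - (R (f k) / S (f k)) * ip (f (k + 1)) s ≤
        R u - (R (f k) / S (f k)) * ip u s) :
    Antitone (fun k => R (f k) / S (f k)) ∧
    ∃ lam : ℝ, Tendsto (fun k => R (f k) / S (f k)) atTop (nhds lam) ∧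
      0 ≤ lam ∧ lam ≤ R (f 0) / S (f 0) ∧
      (∃ φ : ℕ → ℕ, StrictMono φ ∧ ∃ g : Fin n → ℝ,
        Tendsto (fun k => f (φ k)) atTop (nhds g)) ∧
      ∀ fstar : Fin n → ℝ, MapClusterPt fstar atTop f →
        fstar ≠ 0 ∧ lam = R fstar / S fstar ∧
        ∃ rstar ∈ subdiff R fstar, ∃ sstar ∈ subdiff S fstar,
          rstar - lam • sstar = 0 := by
  classical
  obtain ⟨KS, hKS⟩ := hSlip
  obtain ⟨KR, hKR⟩ := hRlip
  set F : ℕ → ℝ := fun k => R (f k) / S (f k) with hF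
  have hS0' : S 0 = 0 := (hS0 0).mpr rfl
  have hfne : ∀ k, f k ≠ 0 := by
    intro k hk
    have h := hnorm k
    rw [hk] at h; simp at h
  have hSpos : ∀ k, 0 < S (f k) := fun k =>
    lt_of_le_of_ne (hSnonneg _) fun h => hfne k ((hS0 _).mp h.symm)
  have hFnonneg : ∀ k, 0 ≤ F k := fun k => div_nonneg (hRnonneg _) (hSnonneg _)
  choose s hsmem hsmin using hstep
  have heuler : ∀ k, ip (s k) (f k) = S (f k) := fun k => euler hShom (hsmem k)
  have hsupp : ∀ k y, ip (s k) y ≤ S y := fun k => support_ineq hShom (hsmem k)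
  have hval : ∀ k, R (f (k + 1)) - F k * ip (f (k + 1)) (s k) ≤ 0 := by
    intro k
    have h := hsmin k (f k) (le_of_eq (hnorm k))
    have h0 : R (f k) - F k * ip (f k) (s k) = 0 := by
      rw [ip_comm, heuler k]
      show R (f k) - R (f k) / S (f k) * S (f k) = 0
      rw [div_mul_cancel₀ _ (ne_of_gt (hSpos k)), sub_self]
    linarith
  have hsucc : ∀ k, F (k + 1) ≤ F k := by
    intro k
    have h2 := hval k
    have h3 : ip (f (k + 1)) (s k) ≤ S (f (k + 1)) := by
      rw [ip_comm]; exact hsupp k _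
    have h1 : R (f (k + 1)) ≤ F k * S (f (k + 1)) := by
      nlinarith [hFnonneg k]
    rw [hF]
    rw [div_le_iff₀ (hSpos (k + 1))]
    linarith
  have hanti : Antitone F := antitone_nat_of_succ_le hsucc
  have hbdd : BddBelow (Set.range F) := ⟨0, by rintro x ⟨k, rfl⟩; exact hFnonneg k⟩
  set lam : ℝ := ⨅ k, F k with hlamdef
  have htend : Tendsto F atTop (nhds lam) := tendsto_atTop_ciInf hanti hbdd
  have hlam0 : 0 ≤ lam := le_ciInf hFnonneg
  have hlamF0 : lam ≤ F 0 := ciInf_le hbdd 0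
  -- norm bounds
  have hnormle : ∀ k, ‖f k‖ ≤ 1 := by
    intro k
    rw [pi_norm_le_iff_of_nonneg zero_le_one]
    intro i
    have h1 : (f k i) ^ 2 ≤ 1 := by
      rw [← hnorm k]
      exact Finset.single_le_sum (fun j _ => sq_nonneg (f k j)) (Finset.mem_univ i)
    rw [Real.norm_eq_abs]
    nlinarith [abs_nonneg (f k i), sq_abs (f k i)]
  have hSbound : ∀ y : Fin n → ℝ, S y ≤ KS * ‖y‖ := by
    intro y
    have h := hKS.dist_le_mul y 0
    rw [Real.dist_eq, hS0', dist_zero_right, sub_zero] at h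
    exact le_trans (le_abs_self _) h
  have hmemball : ∀ k, f k ∈ Metric.closedBall (0 : Fin n → ℝ) 1 := by
    intro k
    rw [Metric.mem_closedBall, dist_zero_right]
    exact hnormle k
  refine ⟨hanti, lam, htend, hlam0, hlamF0, ?_, ?_⟩
  · obtain ⟨g, -, φ, hφ, hconv⟩ :=
      (isCompact_closedBall (0 : Fin n → ℝ) 1).tendsto_subseq hmemball
    exact ⟨φ, hφ, g, hconv⟩
  · intro fstar hcl
    obtain ⟨ψ, hψ, hψt⟩ := TopologicalSpace.FirstCountableTopology.tendsto_subseq hcl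
    -- subgradients are bounded
    have hsball : ∀ k, s (ψ k) ∈ Metric.closedBall (0 : Fin n → ℝ) KS := by
      intro k
      rw [Metric.mem_closedBall, dist_zero_right,
        pi_norm_le_iff_of_nonneg KS.coe_nonneg]
      intro i
      have hsingle : ‖(Pi.single i 1 : Fin n → ℝ)‖ ≤ 1 := by
        rw [pi_norm_le_iff_of_nonneg zero_le_one]
        intro j
        rw [Real.norm_eq_abs, Pi.single_apply]
        split_ifs <;> simp
      have h1 : ip (s (ψ k)) (Pi.single i 1) ≤ S (Pi.single i 1) := hsupp _ _
      have h2 : ip (s (ψ k)) (-Pi.single i 1) ≤ S (-Pi.single i 1) := hsupp _ _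
      have h3 : S (Pi.single i 1) ≤ KS := by
        have := hSbound (Pi.single i 1)
        nlinarith [KS.coe_nonneg]
      rw [hSeven] at h2
      have e1 : ip (s (ψ k)) (Pi.single i 1) = s (ψ k) i := ip_single _ _
      have e2 : ip (s (ψ k)) (-Pi.single i 1) = -(s (ψ k) i) := by
        rw [ip_neg_right, e1]
      rw [Real.norm_eq_abs, abs_le]
      constructor <;> nlinarith
    obtain ⟨sstar, -, χ, hχ, hst⟩ :=
      (isCompact_closedBall (0 : Fin n → ℝ) KS).tendsto_subseq hsball
    set m : ℕ → ℕ := ψ ∘ χ with hmdef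
    have hm : StrictMono m := hψ.comp hχ
    have hmt : Tendsto (fun k => f (m k)) atTop (nhds fstar) := by
      have := hψt.comp hχ.tendsto_atTop
      exact this
    have hst' : Tendsto (fun k => s (m k)) atTop (nhds sstar) := hst
    -- fstar is on the sphere
    have hsum : ∑ i, fstar i ^ 2 = 1 := by
      have hc : Continuous fun x : Fin n → ℝ => ∑ i, x i ^ 2 :=
        continuous_finset_sum _ fun i _ => (continuous_apply i).pow 2
      have h1 : Tendsto (fun k => ∑ i, (f (m k) i) ^ 2) atTop (nhds (∑ i, fstar i ^ 2)) :=
        (hc.tendsto _).comp hmt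
      have h2 : (fun k => ∑ i, (f (m k) i) ^ 2) = fun _ => (1 : ℝ) :=
        funext fun k => hnorm _
      rw [h2] at h1
      exact tendsto_nhds_unique h1 tendsto_const_nhds
    have hfne' : fstar ≠ 0 := by
      intro h
      rw [h] at hsum; simp at hsum
    have hSfpos : 0 < S fstar :=
      lt_of_le_of_ne (hSnonneg _) fun h => hfne' ((hS0 _).mp h.symm)
    have hRc : Continuous R := hKR.continuous
    have hSc : Continuous S := hKS.continuous
    -- lam = R fstar / S fstar
    have hFlim1 : Tendsto (fun k => F (m k)) atTop (nhds (R fstar / S fstar)) :=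
      Tendsto.div ((hRc.tendsto _).comp hmt) ((hSc.tendsto _).comp hmt) (ne_of_gt hSfpos)
    have hFlim2 : Tendsto (fun k => F (m k)) atTop (nhds lam) :=
      htend.comp hm.tendsto_atTop
    have hlameq : lam = R fstar / S fstar := tendsto_nhds_unique hFlim2 hFlim1
    -- sstar ∈ subdiff S fstar
    have hsstar : sstar ∈ subdiff S fstar := by
      intro y
      have hk : ∀ k, S (f (m k)) + ip (s (m k)) (y - f (m k)) ≤ S y :=
        fun k => hsmem (m k) y
      have hlim : Tendsto (fun k => S (f (m k)) + ip (s (m k)) (y - f (m k))) atTop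
          (nhds (S fstar + ip sstar (y - fstar))) := by
        apply Tendsto.add ((hSc.tendsto _).comp hmt)
        have : Tendsto (fun k => (s (m k), y - f (m k))) atTop
            (nhds (sstar, y - fstar)) :=
          hst'.prodMk_nhds (tendsto_const_nhds.sub hmt)
        exact (ip_cont.tendsto _).comp this
      exact le_of_tendsto hlim (Eventually.of_forall hk)
    -- key global inequality
    have hball : ∀ u : Fin n → ℝ, (∑ i, u i ^ 2) ≤ 1 → lam * ip u sstar ≤ R u := by
      intro u hu
      have hk : ∀ k, (F (m k + 1) - F (m k)) * KS ≤ R u - F (m k) * ip u (s (m k)) := by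
        intro k
        have ha := hsmin (m k) u hu
        have hb : ip (f (m k + 1)) (s (m k)) ≤ S (f (m k + 1)) := by
          rw [ip_comm]; exact hsupp _ _
        have hc : F (m k + 1) * S (f (m k + 1)) = R (f (m k + 1)) :=
          div_mul_cancel₀ _ (ne_of_gt (hSpos (m k + 1)))
        have hd : S (f (m k + 1)) ≤ KS := by
          have h1 := hSbound (f (m k + 1))
          have h2 := hnormle (m k + 1)
          nlinarith [KS.coe_nonneg]
        have he : F (m k + 1) - F (m k) ≤ 0 := sub_nonpos.mpr (hsucc (m k))
        nlinarith [hFnonneg (m k), hSnonneg (f (m k + 1)),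
          mul_nonneg (hFnonneg (m k)) (sub_nonneg.mpr hb),
          mul_nonpos_of_nonpos_of_nonneg he (sub_nonneg.mpr hd)]
      have hm1 : StrictMono fun k => m k + 1 := fun a b hab => by
        exact Nat.succ_lt_succ (hm hab)
      have hL1 : Tendsto (fun k => F (m k + 1)) atTop (nhds lam) :=
        htend.comp hm1.tendsto_atTop
      have hLHS : Tendsto (fun k => (F (m k + 1) - F (m k)) * (KS : ℝ)) atTop
          (nhds ((lam - lam) * KS)) :=
        (hL1.sub hFlim2).mul tendsto_const_nhds
      have hipc : Continuous fun v : Fin n → ℝ => ip u v :=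
        continuous_finset_sum _ fun i _ => continuous_const.mul (continuous_apply i)
      have hRHS : Tendsto (fun k => R u - F (m k) * ip u (s (m k))) atTop
          (nhds (R u - lam * ip u sstar)) :=
        tendsto_const_nhds.sub (hFlim2.mul ((hipc.tendsto _).comp hst'))
      have := le_of_tendsto_of_tendsto' hLHS hRHS hk
      rw [sub_self, zero_mul] at this
      linarith
    have hglobal : ∀ u : Fin n → ℝ, lam * ip u sstar ≤ R u := by
      intro u
      set A := ∑ i, u i ^ 2 with hA
      have hA0 : 0 ≤ A := Finset.sum_nonneg fun i _ => sq_nonneg _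
      set t : ℝ := (1 + A)⁻¹ with htdef
      have h1A : (0:ℝ) < 1 + A := by linarith
      have ht : 0 < t := inv_pos.mpr h1A
      have htA : t * (1 + A) = 1 := inv_mul_cancel₀ (ne_of_gt h1A)
      have htu : (∑ i, ((t • u) i) ^ 2) ≤ 1 := by
        have : (∑ i, ((t • u) i) ^ 2) = t ^ 2 * A := by
          rw [hA, Finset.mul_sum]
          congr 1; ext i
          simp [Pi.smul_apply, smul_eq_mul, mul_pow]
        rw [this]
        nlinarith [sq_nonneg (t - 1), ht.le]
      have h := hball (t • u) htu
      rw [ip_smul_left] at h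
      have hRt : R (t • u) = t * R u := by
        have := hRhom t ht.le u
        simpa using this
      rw [hRt] at h
      have := (mul_le_mul_iff_right₀ ht).mp (by linarith [h] : t * (lam * ip u sstar) ≤ t * R u)
      exact this
    have hrsub : lam • sstar ∈ subdiff R fstar := by
      intro y
      rw [ip_smul_left, ip_sub_right, euler hShom hsstar]
      have h1 : lam * S fstar = R fstar := by
        rw [hlameq]; exact div_mul_cancel₀ _ (ne_of_gt hSfpos)
      have h2 : lam * ip sstar y ≤ R y := by
        rw [ip_comm]; exact hglobal y
      nlinarith [h2]
    exact ⟨hfne', hlameq, lam • sstar, hrsub, sstar, hsstar, by simp⟩
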